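/- Let H be a continuous CDF of a Borel probability measure on [0, M], and let 0 ≤ x1 ≤ μ ≤ x2 ≤ M satisfy ∫_{x1}^{x2} (θ − μ) dH(θ) = 0. Define Ĥ(θ) = H(θ) for θ < x1; Ĥ(θ) = H(x1) for x1 ≤ θ < μ; Ĥ(θ) = H(x2) for μ ≤ θ < x2; and Ĥ(θ) = H(θ) for θ ≥ x2. Then Ĥ is the CDF of a Borel probability measure on [0, M], and H is a mean-preserving spread of Ĥ; that is, ∫_v^M H(t) dt ≤ ∫_v^M Ĥ(t) dt for every v ∈ [0, M], with equality at v = 0. -/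

import Mathlib

open MeasureTheory

/-- If `H` is a continuous CDF of a Borel probability measure `ρ`
on `[0,M]` and `x1 ≤ μ ≤ x2` satisfy `∫_{[x1,x2]} (θ−μ) dρ = 0`, then the
pooled function `Ĥ` (equal to `H` outside `[x1,x2]`, to `H(x1)` on `[x1,μ)` and
to `H(x2)` on `[μ,x2)`) is the CDF of a Borel probability measure on `[0,M]`,
and `H` is a mean-preserving spread of `Ĥ`. -/
theorem stmt_12 (M : ℝ) (hM : 0 < M)
    (ρ : Measure ℝ) [IsProbabilityMeasure ρ]
    (hρs : ρ (Set.Icc 0 M)ᶜ = 0)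
    (H : ℝ → ℝ) (hH : ∀ v, H v = (ρ (Set.Iic v)).toReal)
    (hHc : Continuous H)
    (x1 μ x2 : ℝ) (h0 : 0 ≤ x1) (h1 : x1 ≤ μ) (h2 : μ ≤ x2) (h3 : x2 ≤ M)
    (hmean : (∫ θ in Set.Icc x1 x2, (θ - μ) ∂ρ) = 0)
    (Hhat : ℝ → ℝ)
    (hHhat : ∀ θ, Hhat θ = if θ < x1 then H θ
      else if θ < μ then H x1
      else if θ < x2 then H x2
      else H θ) :
    (∃ ν : Measure ℝ, IsProbabilityMeasure ν ∧ ν (Set.Icc 0 M)ᶜ = 0 ∧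
      ∀ v, Hhat v = (ν (Set.Iic v)).toReal) ∧
    (∀ v ∈ Set.Icc (0:ℝ) M, (∫ t in v..M, H t) ≤ ∫ t in v..M, Hhat t) ∧
    ((∫ t in (0:ℝ)..M, H t) = ∫ t in (0:ℝ)..M, Hhat t) := by
  have h12 : x1 ≤ x2 := h1.trans h2
  have hfin : ∀ s : Set ℝ, ρ s ≠ ⊤ := fun s => measure_ne_top ρ s
  have hHmono : Monotone H := by
    intro a b hab
    rw [hH, hH]
    exact ENNReal.toReal_mono (hfin _) (measure_mono (Set.Iic_subset_Iic.2 hab))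
  -- ρ has no atoms since H is continuous
  have hatom : ∀ a : ℝ, ρ {a} = 0 := by
    intro a
    have key : ∀ n : ℕ, (ρ {a}).toReal ≤ H a - H (a - 1/(n+1)) := by
      intro n
      have hpos : (0:ℝ) < 1/(n+1) := by positivity
      have hle : a - 1/(n+1) ≤ a := by linarith
      have hsub : {a} ⊆ Set.Ioc (a - 1/(n+1)) a := by
        intro x hx
        simp only [Set.mem_singleton_iff] at hx
        subst hx
        exact ⟨by linarith, le_rfl⟩
      have hIoc : ρ (Set.Ioc (a - 1/(n+1)) a) = ρ (Set.Iic a) - ρ (Set.Iic (a - 1/(n+1))) := by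
        rw [← Set.Iic_sdiff_Iic]
        exact measure_diff (Set.Iic_subset_Iic.2 hle) measurableSet_Iic.nullMeasurableSet (hfin _)
      have h1' : (ρ {a}).toReal ≤ (ρ (Set.Ioc (a - 1/(n+1)) a)).toReal :=
        ENNReal.toReal_mono (hfin _) (measure_mono hsub)
      rw [hIoc, ENNReal.toReal_sub_of_le (measure_mono (Set.Iic_subset_Iic.2 hle)) (hfin _)] at h1'
      rw [hH, hH]
      exact h1'
    have htend : Filter.Tendsto (fun n : ℕ => H a - H (a - 1/(n+1))) Filter.atTop (nhds 0) := by
      have h1' : Filter.Tendsto (fun n : ℕ => a - 1/(n+1)) Filter.atTop (nhds a) := by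
        have := tendsto_one_div_add_atTop_nhds_zero_nat (𝕜 := ℝ)
        simpa using Filter.Tendsto.sub (tendsto_const_nhds (x := a)) this
      have h2' := (hHc.tendsto a).comp h1'
      have h3' := Filter.Tendsto.sub (tendsto_const_nhds (x := H a)) h2'
      simpa using h3'
    have hle0 : (ρ {a}).toReal ≤ 0 := ge_of_tendsto htend (Filter.Eventually.of_forall key)
    have : (ρ {a}).toReal = 0 := le_antisymm hle0 ENNReal.toReal_nonneg
    rcases (ENNReal.toReal_eq_zero_iff _).mp this with h | h
    · exact h
    · exact absurd h (hfin _)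
  haveI hNA : NullSingletonClass ρ := ⟨hatom⟩
  -- basic measure identities
  have hsum : ρ (Set.Iic x1) + ρ (Set.Ioc x1 x2) = ρ (Set.Iic x2) := by
    rw [← measure_union (Set.Iic_disjoint_Ioc le_rfl) measurableSet_Ioc,
      Set.Iic_union_Ioc_eq_Iic h12]
  have hIocR : (ρ (Set.Ioc x1 x2)).toReal = H x2 - H x1 := by
    have := congrArg ENNReal.toReal hsum
    rw [ENNReal.toReal_add (hfin _) (hfin _)] at this
    rw [hH, hH]
    linarith
  have hIccIoc : ρ (Set.Icc x1 x2) = ρ (Set.Ioc x1 x2) := (measure_congr Ioc_ae_eq_Icc).symm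
  -- mean identity
  have hid_int : IntegrableOn (fun θ : ℝ => θ) (Set.Icc x1 x2) ρ :=
    ContinuousOn.integrableOn_compact isCompact_Icc continuous_id.continuousOn
  have hmeanθ : ∫ θ in Set.Icc x1 x2, θ ∂ρ = (H x2 - H x1) * μ := by
    have hconst : IntegrableOn (fun _ : ℝ => μ) (Set.Icc x1 x2) ρ :=
      integrableOn_const (hfin _)
    have h := hmean
    rw [integral_sub hid_int hconst] at h
    rw [setIntegral_const, smul_eq_mul, measureReal_def, hIccIoc] at h
    rw [hIocR] at h
    linarith
  have hIocθ : ∫ θ in Set.Ioc x1 x2, θ ∂ρ = (H x2 - H x1) * μ := by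
    rw [← integral_Icc_eq_integral_Ioc]
    exact hmeanθ
  -- integral of H over [x1,x2] via Fubini
  set f2 : ℝ → ℝ := fun θ => max (x2 - max x1 θ) 0 with hf2def
  have hf2cont : Continuous f2 :=
    (continuous_const.sub (continuous_const.max continuous_id)).max continuous_const
  have hf2nonneg : ∀ θ, 0 ≤ f2 θ := fun θ => le_max_right _ _
  have hf2bdd : ∀ θ, f2 θ ≤ x2 - x1 := by
    intro θ
    apply max_le
    · have := le_max_left x1 θ; linarith
    · linarith
  have hf2int : Integrable f2 ρ := by
    apply (integrable_const (x2 - x1)).mono' hf2cont.aestronglyMeasurable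
    exact Filter.Eventually.of_forall fun θ => by
      rw [Real.norm_eq_abs, abs_of_nonneg (hf2nonneg θ)]; exact hf2bdd θ
  have hintH : ∫ t in x1..x2, H t = (μ - x1) * H x1 + (x2 - μ) * H x2 := by
    rw [intervalIntegral.integral_of_le h12]
    have hFm : Measurable (fun t : ℝ => ρ (Set.Iic t)) :=
      Monotone.measurable (fun a b hab => measure_mono (Set.Iic_subset_Iic.2 hab))
    have step1 : ∫ t in Set.Ioc x1 x2, H t ∂volume
        = (∫⁻ t in Set.Ioc x1 x2, ρ (Set.Iic t) ∂volume).toReal := by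
      simp_rw [hH]
      exact integral_toReal hFm.aemeasurable
        (Filter.Eventually.of_forall fun t => lt_of_le_of_ne le_top (hfin _))
    have hset : MeasurableSet {p : ℝ × ℝ | p.2 ≤ p.1} :=
      measurableSet_le measurable_snd measurable_fst
    set F : ℝ → ℝ → ENNReal := fun t θ => Set.indicator {p : ℝ × ℝ | p.2 ≤ p.1} 1 (t, θ) with hFdef
    have hswap : ∫⁻ t in Set.Ioc x1 x2, ∫⁻ θ, F t θ ∂ρ ∂volume
        = ∫⁻ θ, ∫⁻ t in Set.Ioc x1 x2, F t θ ∂volume ∂ρ := by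
      apply lintegral_lintegral_swap
      exact ((measurable_one.indicator hset).comp measurable_id).aemeasurable
    have hinner1 : ∀ t : ℝ, ∫⁻ θ, F t θ ∂ρ = ρ (Set.Iic t) := by
      intro t
      have : (fun θ => F t θ) = (Set.Iic t).indicator 1 := by
        funext θ
        by_cases h : θ ≤ t <;> simp [hFdef, Set.indicator, h]
      rw [this, lintegral_indicator_one measurableSet_Iic]
    have hinner2 : ∀ θ : ℝ, (∫⁻ t in Set.Ioc x1 x2, F t θ ∂volume)
        = ENNReal.ofReal (x2 - max x1 θ) := by
      intro θ
      have hFθ : (fun t => F t θ) = (Set.Ici θ).indicator 1 := by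
        funext t
        by_cases h : θ ≤ t <;> simp [hFdef, Set.indicator, h]
      rw [hFθ, lintegral_indicator_one measurableSet_Ici,
        Measure.restrict_apply measurableSet_Ici]
      rcases le_or_gt θ x1 with h | h
      · have : Set.Ici θ ∩ Set.Ioc x1 x2 = Set.Ioc x1 x2 :=
          Set.inter_eq_right.mpr (fun t ht => le_trans h (le_of_lt ht.1))
        rw [this, Real.volume_Ioc, max_eq_left h]
      · have : Set.Ici θ ∩ Set.Ioc x1 x2 = Set.Icc θ x2 := by
          ext t
          constructor
          · rintro ⟨ht1, _, ht3⟩; exact ⟨ht1, ht3⟩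
          · rintro ⟨ht1, ht2⟩; exact ⟨ht1, lt_of_lt_of_le h ht1, ht2⟩
        rw [this, Real.volume_Icc, max_eq_right h.le]
    have step2 : ∫⁻ t in Set.Ioc x1 x2, ρ (Set.Iic t) ∂volume
        = ∫⁻ θ, ENNReal.ofReal (f2 θ) ∂ρ := by
      calc ∫⁻ t in Set.Ioc x1 x2, ρ (Set.Iic t) ∂volume
          = ∫⁻ t in Set.Ioc x1 x2, ∫⁻ θ, F t θ ∂ρ ∂volume := by
            exact lintegral_congr fun t => (hinner1 t).symm
        _ = ∫⁻ θ, ∫⁻ t in Set.Ioc x1 x2, F t θ ∂volume ∂ρ := hswap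
        _ = ∫⁻ θ, ENNReal.ofReal (f2 θ) ∂ρ := by
            apply lintegral_congr
            intro θ
            rw [hinner2 θ]
            rcases le_or_gt 0 (x2 - max x1 θ) with h | h
            · rw [hf2def]; simp only; rw [max_eq_left h]
            · rw [hf2def]; simp only; rw [max_eq_right h.le, ENNReal.ofReal_of_nonpos h.le,
                ENNReal.ofReal_zero]
    have step3 : (∫⁻ θ, ENNReal.ofReal (f2 θ) ∂ρ).toReal = ∫ θ, f2 θ ∂ρ := by
      rw [← ofReal_integral_eq_lintegral_ofReal hf2int
        (Filter.Eventually.of_forall hf2nonneg),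
        ENNReal.toReal_ofReal (integral_nonneg hf2nonneg)]
    have step4 : ∫ θ, f2 θ ∂ρ = (μ - x1) * H x1 + (x2 - μ) * H x2 := by
      have hIic2 : ∫ θ in Set.Iic x2, f2 θ ∂ρ
          = ∫ θ in Set.Iic x1, f2 θ ∂ρ + ∫ θ in Set.Ioc x1 x2, f2 θ ∂ρ := by
        rw [← setIntegral_union (Set.Iic_disjoint_Ioc le_rfl) measurableSet_Ioc
          hf2int.integrableOn hf2int.integrableOn, Set.Iic_union_Ioc_eq_Iic h12]
      have hIoi : ∫ θ in Set.Ioi x2, f2 θ ∂ρ = 0 := by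
        rw [setIntegral_congr_fun measurableSet_Ioi
          (fun θ (hθ : x2 < θ) => by
            show f2 θ = 0
            rw [hf2def]
            simp only
            rw [max_eq_right]
            have := le_max_right x1 θ
            linarith)]
        simp
      have hsplit : ∫ θ, f2 θ ∂ρ = ∫ θ in Set.Iic x2, f2 θ ∂ρ := by
        rw [← integral_add_compl measurableSet_Iic hf2int, Set.compl_Iic]
        rw [hIoi, add_zero]
      have hI1 : ∫ θ in Set.Iic x1, f2 θ ∂ρ = H x1 * (x2 - x1) := by
        rw [setIntegral_congr_fun measurableSet_Iic
          (fun θ (hθ : θ ≤ x1) => by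
            show f2 θ = x2 - x1
            rw [hf2def]
            simp only
            rw [max_eq_left hθ, max_eq_left (by linarith)])]
        rw [setIntegral_const, smul_eq_mul, measureReal_def, hH]
      have hI2 : ∫ θ in Set.Ioc x1 x2, f2 θ ∂ρ = (H x2 - H x1) * (x2 - μ) := by
        rw [setIntegral_congr_fun measurableSet_Ioc
          (fun θ (hθ : θ ∈ Set.Ioc x1 x2) => by
            show f2 θ = x2 - θ
            rw [hf2def]
            simp only
            rw [max_eq_right hθ.1.le, max_eq_left (by linarith [hθ.2])])]
        have hidIoc : IntegrableOn (fun θ : ℝ => θ) (Set.Ioc x1 x2) ρ :=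
          hid_int.mono_set Set.Ioc_subset_Icc_self
        have hcIoc : IntegrableOn (fun _ : ℝ => x2) (Set.Ioc x1 x2) ρ :=
          integrableOn_const (hfin _)
        rw [integral_sub hcIoc hidIoc, setIntegral_const, smul_eq_mul, hIocθ, measureReal_def, hIocR]
        ring
      rw [hsplit, hIic2, hI1, hI2]
      ring
    rw [step1, step2, step3, step4]
  -- measurability and integrability of Hhat
  have hHhatMeas : Measurable Hhat := by
    have heq : Hhat = fun t => if t < x1 then H t
        else if t < μ then H x1 else if t < x2 then H x2 else H t := funext hHhat
    rw [heq]
    have m1 : MeasurableSet {t : ℝ | t < x1} := measurableSet_Iio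
    have m2 : MeasurableSet {t : ℝ | t < μ} := measurableSet_Iio
    have m3 : MeasurableSet {t : ℝ | t < x2} := measurableSet_Iio
    exact Measurable.ite m1 hHc.measurable
      (Measurable.ite m2 measurable_const (Measurable.ite m3 measurable_const hHc.measurable))
  have hH0 : ∀ v, 0 ≤ H v := fun v => (hH v).symm ▸ ENNReal.toReal_nonneg
  have hH1 : ∀ v, H v ≤ 1 := by
    intro v
    rw [hH]
    have : ρ (Set.Iic v) ≤ 1 := prob_le_one
    calc (ρ (Set.Iic v)).toReal ≤ (1 : ENNReal).toReal := ENNReal.toReal_mono ENNReal.one_ne_top this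
      _ = 1 := by simp
  have hHhatbdd : ∀ t, ‖Hhat t‖ ≤ 1 := by
    intro t
    rw [hHhat t]
    split_ifs <;> rw [Real.norm_eq_abs, abs_of_nonneg (hH0 _)] <;> exact hH1 _
  have hHhatInt : ∀ a b : ℝ, IntervalIntegrable Hhat volume a b := by
    intro a b
    apply IntervalIntegrable.mono_fun' (g := fun _ => (1:ℝ))
      (intervalIntegrable_const) hHhatMeas.aestronglyMeasurable.restrict
    exact Filter.Eventually.of_forall fun t => hHhatbdd t
  have hHInt : ∀ a b : ℝ, IntervalIntegrable H volume a b := fun a b =>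
    hHc.intervalIntegrable a b
  -- integral of Hhat over [x1,x2]
  have hintHhat : ∫ t in x1..x2, Hhat t = (μ - x1) * H x1 + (x2 - μ) * H x2 := by
    have e1 : ∫ t in x1..μ, Hhat t = (μ - x1) * H x1 := by
      rw [intervalIntegral.integral_of_le h1, ← setIntegral_congr_set Ioo_ae_eq_Ioc,
        setIntegral_congr_fun measurableSet_Ioo
          (fun t (ht : t ∈ Set.Ioo x1 μ) => by
            show Hhat t = H x1
            rw [hHhat t, if_neg (not_lt.2 ht.1.le), if_pos ht.2]),
        setIntegral_const, measureReal_def, Real.volume_Ioo, ENNReal.toReal_ofReal (by linarith), smul_eq_mul]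
    have e2 : ∫ t in μ..x2, Hhat t = (x2 - μ) * H x2 := by
      rw [intervalIntegral.integral_of_le h2, ← setIntegral_congr_set Ioo_ae_eq_Ioc,
        setIntegral_congr_fun measurableSet_Ioo
          (fun t (ht : t ∈ Set.Ioo μ x2) => by
            show Hhat t = H x2
            rw [hHhat t, if_neg (not_lt.2 (h1.trans ht.1.le)), if_neg (not_lt.2 ht.1.le),
              if_pos ht.2]),
        setIntegral_const, measureReal_def, Real.volume_Ioo, ENNReal.toReal_ofReal (by linarith), smul_eq_mul]
    rw [← intervalIntegral.integral_add_adjacent_intervals (hHhatInt x1 μ) (hHhatInt μ x2),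
      e1, e2]
  -- the difference function
  set g : ℝ → ℝ := fun t => Hhat t - H t with hgdef
  have hgInt : ∀ a b : ℝ, IntervalIntegrable g volume a b := fun a b =>
    (hHhatInt a b).sub (hHInt a b)
  have hdiff : ∀ a b : ℝ, ∫ t in a..b, g t = (∫ t in a..b, Hhat t) - ∫ t in a..b, H t :=
    fun a b => intervalIntegral.integral_sub (hHhatInt a b) (hHInt a b)
  have hkey : ∫ t in x1..x2, g t = 0 := by
    rw [hdiff, hintHhat, hintH]; ring
  have hgright : ∀ t, x2 ≤ t → g t = 0 := by
    intro t ht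
    rw [hgdef]
    simp only
    rw [hHhat t, if_neg (not_lt.2 (h12.trans ht)), if_neg (not_lt.2 (h2.trans ht)),
      if_neg (not_lt.2 ht), sub_self]
  have hzero_left : ∀ a b : ℝ, a ≤ b → b ≤ x1 → ∫ t in a..b, g t = 0 := by
    intro a b hab hbx1
    rw [intervalIntegral.integral_of_le hab, ← setIntegral_congr_set Ioo_ae_eq_Ioc,
      setIntegral_congr_fun measurableSet_Ioo
        (fun t (ht : t ∈ Set.Ioo a b) => by
          show g t = 0
          rw [hgdef]
          simp only
          rw [hHhat t, if_pos (lt_of_lt_of_le ht.2 hbx1), sub_self])]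
    simp
  have hzero_right : ∀ a b : ℝ, a ≤ b → x2 ≤ a → ∫ t in a..b, g t = 0 := by
    intro a b hab hx2a
    rw [intervalIntegral.integral_of_le hab,
      setIntegral_congr_fun measurableSet_Ioc
        (fun t (ht : t ∈ Set.Ioc a b) => hgright t (hx2a.trans ht.1.le))]
    simp
  have hnonpos : ∀ a b : ℝ, x1 ≤ a → a ≤ b → b ≤ μ → ∫ t in a..b, g t ≤ 0 := by
    intro a b hx1a hab hbμ
    rw [intervalIntegral.integral_of_le hab, ← setIntegral_congr_set Ioo_ae_eq_Ioc]
    apply setIntegral_nonpos measurableSet_Ioo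
    intro t ht
    have hgt : g t = H x1 - H t := by
      rw [hgdef]
      simp only
      rw [hHhat t, if_neg (not_lt.2 (hx1a.trans ht.1.le)), if_pos (lt_of_lt_of_le ht.2 hbμ)]
    rw [hgt]
    have : H x1 ≤ H t := hHmono (hx1a.trans ht.1.le)
    linarith
  have hnonneg : ∀ a b : ℝ, μ ≤ a → a ≤ b → b ≤ x2 → 0 ≤ ∫ t in a..b, g t := by
    intro a b hμa hab hbx2
    rw [intervalIntegral.integral_of_le hab, ← setIntegral_congr_set Ioo_ae_eq_Ioc]
    apply setIntegral_nonneg measurableSet_Ioo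
    intro t ht
    have hgt : g t = H x2 - H t := by
      rw [hgdef]
      simp only
      rw [hHhat t, if_neg (not_lt.2 ((h1.trans hμa).trans ht.1.le)),
        if_neg (not_lt.2 (hμa.trans ht.1.le)), if_pos (lt_of_lt_of_le ht.2 hbx2)]
    rw [hgt]
    have : H t ≤ H x2 := hHmono (ht.2.le.trans hbx2)
    linarith
  have hx1M : ∫ t in x1..M, g t = 0 := by
    rw [← intervalIntegral.integral_add_adjacent_intervals (hgInt x1 x2) (hgInt x2 M),
      hkey, hzero_right x2 M h3 le_rfl, add_zero]
  have hcase1 : ∀ v : ℝ, v ≤ x1 → ∫ t in v..M, g t = 0 := by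
    intro v hv
    rw [← intervalIntegral.integral_add_adjacent_intervals (hgInt v x1) (hgInt x1 M),
      hzero_left v x1 hv le_rfl, hx1M, add_zero]
  have hge : ∀ v : ℝ, 0 ≤ v → v ≤ M → 0 ≤ ∫ t in v..M, g t := by
    intro v hv0 hvM
    rcases le_total v x1 with h | hvx1
    · rw [hcase1 v h]
    · rcases le_total v μ with hvμ | hμv
      · have hadj : (∫ t in x1..v, g t) + ∫ t in v..M, g t = ∫ t in x1..M, g t :=
          intervalIntegral.integral_add_adjacent_intervals (hgInt x1 v) (hgInt v M)
        have := hnonpos x1 v le_rfl hvx1 hvμ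
        rw [hx1M] at hadj
        linarith
      · rcases le_total v x2 with hvx2 | hx2v
        · have hadj : (∫ t in v..x2, g t) + ∫ t in x2..M, g t = ∫ t in v..M, g t :=
            intervalIntegral.integral_add_adjacent_intervals (hgInt v x2) (hgInt x2 M)
          have := hnonneg v x2 hμv hvx2 le_rfl
          rw [hzero_right x2 M h3 le_rfl] at hadj
          linarith
        · rw [hzero_right v M hvM hx2v]
  refine ⟨?_, ?_, ?_⟩
  · -- construction of the measure ν
    set ν : Measure ℝ := ρ.restrict (Set.Icc x1 x2)ᶜ + (ρ (Set.Icc x1 x2)) • Measure.dirac μ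
      with hνdef
    have hIccM : MeasurableSet (Set.Icc x1 x2) := measurableSet_Icc
    have hν_apply : ∀ s : Set ℝ, MeasurableSet s →
        ν s = ρ (s ∩ (Set.Icc x1 x2)ᶜ) + ρ (Set.Icc x1 x2) * (Set.indicator s 1 μ) := by
      intro s hs
      rw [hνdef]
      simp [Measure.restrict_apply hs, Measure.dirac_apply' μ hs]
    have hμmem : μ ∈ Set.Icc 0 M := ⟨h0.trans h1, h2.trans h3⟩
    have hprob : IsProbabilityMeasure ν := by
      constructor
      rw [hν_apply Set.univ MeasurableSet.univ, Set.univ_inter,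
        Set.indicator_of_mem (Set.mem_univ μ)]
      simp only [Pi.one_apply, mul_one]
      rw [add_comm, measure_add_measure_compl hIccM, measure_univ]
    refine ⟨ν, hprob, ?_, ?_⟩
    · rw [hν_apply _ measurableSet_Icc.compl]
      have e1 : ρ ((Set.Icc 0 M)ᶜ ∩ (Set.Icc x1 x2)ᶜ) = 0 :=
        measure_mono_null Set.inter_subset_left hρs
      rw [e1, Set.indicator_of_notMem (by simpa using hμmem), mul_zero, add_zero]
    · intro v
      rw [hν_apply _ measurableSet_Iic, hHhat v]
      rcases lt_or_ge v x1 with h | h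
      · rw [if_pos h]
        have e1 : Set.Iic v ∩ (Set.Icc x1 x2)ᶜ = Set.Iic v := by
          apply Set.inter_eq_left.mpr
          intro t ht hC
          exact absurd (lt_of_le_of_lt (le_trans hC.1 (Set.mem_Iic.mp ht)) h) (lt_irrefl x1)
        have e2 : μ ∉ Set.Iic v := by
          simp only [Set.mem_Iic, not_le]
          exact lt_of_lt_of_le h h1
        rw [e1, Set.indicator_of_notMem e2, mul_zero, add_zero, hH]
      · rw [if_neg (not_lt.2 h)]
        rcases lt_or_ge v μ with h' | h'
        · rw [if_pos h']
          have e1 : Set.Iic v ∩ (Set.Icc x1 x2)ᶜ = Set.Iio x1 := by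
            ext t
            simp only [Set.mem_inter_iff, Set.mem_Iic, Set.mem_compl_iff, Set.mem_Icc,
              Set.mem_Iio, not_and, not_le]
            constructor
            · rintro ⟨htv, hC⟩
              by_contra hcon
              push_neg at hcon
              exact absurd (hC hcon) (not_lt.2 (htv.trans (h'.le.trans h2)))
            · intro ht
              exact ⟨ht.le.trans h, fun hx1t => absurd hx1t (not_le.2 ht)⟩
          have e2 : μ ∉ Set.Iic v := by
            simp only [Set.mem_Iic, not_le]
            exact h'
          rw [e1, Set.indicator_of_notMem e2, mul_zero, add_zero,
            measure_congr (Iio_ae_eq_Iic (a := x1)), hH]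
        · rcases lt_or_ge v x2 with h'' | h''
          · rw [if_neg (not_lt.2 h'), if_pos h'']
            have e1 : Set.Iic v ∩ (Set.Icc x1 x2)ᶜ = Set.Iio x1 := by
              ext t
              simp only [Set.mem_inter_iff, Set.mem_Iic, Set.mem_compl_iff, Set.mem_Icc,
                Set.mem_Iio, not_and, not_le]
              constructor
              · rintro ⟨htv, hC⟩
                by_contra hcon
                push_neg at hcon
                exact absurd (hC hcon) (not_lt.2 (htv.trans h''.le))
              · intro ht
                exact ⟨ht.le.trans (h1.trans h'), fun hx1t => absurd hx1t (not_le.2 ht)⟩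
            rw [e1, Set.indicator_of_mem (Set.mem_Iic.mpr h') , Pi.one_apply, mul_one]
            have e3 : ρ (Set.Iio x1) + ρ (Set.Icc x1 x2) = ρ (Set.Iic x2) := by
              rw [← measure_union (by
                  rw [Set.disjoint_left]
                  intro t ht ht'
                  exact absurd ht'.1 (not_le.2 ht)) hIccM]
              congr 1
              ext t
              simp only [Set.mem_union, Set.mem_Iio, Set.mem_Icc, Set.mem_Iic]
              constructor
              · rintro (ht | ht)
                · exact ht.le.trans h12
                · exact ht.2
              · intro ht
                rcases lt_or_ge t x1 with htx | htx
                · exact Or.inl htx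
                · exact Or.inr ⟨htx, ht⟩
            rw [e3, hH]
          · rw [if_neg (not_lt.2 h'), if_neg (not_lt.2 h'')]
            have e2 : μ ∈ Set.Iic v := Set.mem_Iic.mpr (h2.trans h'')
            rw [Set.indicator_of_mem e2, Pi.one_apply, mul_one]
            have e1 : Set.Iic v ∩ (Set.Icc x1 x2)ᶜ = Set.Iic v \ Set.Icc x1 x2 := by
              rw [Set.diff_eq]
            have e3 : ρ (Set.Iic v ∩ Set.Icc x1 x2) + ρ (Set.Iic v \ Set.Icc x1 x2)
                = ρ (Set.Iic v) := measure_inter_add_diff _ hIccM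
            have e4 : Set.Iic v ∩ Set.Icc x1 x2 = Set.Icc x1 x2 :=
              Set.inter_eq_right.mpr (fun t ht => Set.mem_Iic.mpr (ht.2.trans h''))
            rw [e1, hH]
            rw [e4] at e3
            rw [← e3, add_comm]
  · intro v hv
    have := hge v hv.1 hv.2
    rw [hdiff] at this
    linarith
  · have := hcase1 0 h0
    rw [hdiff] at this
    linarith
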